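/- Consider the Jacobian matrix H(ς) ∈ ℝ^{(3L_a-1)×(L_a+3)} of the localization system in equation (23). If all anchor AODs are equal, φ_0 = φ_1 = ⋯ = φ_{L_a-1}, then the columns of H(ς) are linearly dependent, i.e. rank H(ς) < L_a + 3, so HᵀH is singular and the pseudo-inverse H† = (HᵀH)⁻¹Hᵀ does not exist. -/
import Mathlib


/-- Proposition 4 (matrix form): for the Jacobian `H(ς)` of (23), if all anchor
AODs are equal then the columns of `H` are linearly dependent
(`rank H < L_a + 3`), so `HᵀH` is singular and `H† = (HᵀH)⁻¹Hᵀ` does not exist. -/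
theorem stmt_11 (La : ℕ) (hLa : 2 ≤ La)
    (ρ : ℝ) (φ : Fin La → ℝ) (d : Fin La → ℝ) (hd : ∀ ℓ, 0 < d ℓ)
    (H : Matrix (Fin (La - 1) ⊕ Fin La × Fin 2) (Fin 3 ⊕ Fin La) ℝ)
    -- top-left and top-middle zero blocks
    (hTL : ∀ (i : Fin (La - 1)) (j : Fin 3), H (Sum.inl i) (Sum.inl j) = 0)
    -- top-right block [-1_{(La-1)×1}, I_{La-1}]
    (hTR : ∀ (i : Fin (La - 1)) (ℓ : Fin La),
      H (Sum.inl i) (Sum.inr ℓ) =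
        if (ℓ : ℕ) = 0 then -1 else if (ℓ : ℕ) = (i : ℕ) + 1 then 1 else 0)
    -- bottom-left block −1_{La×1} ⊗ I₂ (derivatives w.r.t. p_x, p_y)
    (hBL : ∀ (ℓ : Fin La) (s : Fin 2) (j : Fin 3), (j : ℕ) < 2 →
      H (Sum.inr (ℓ, s)) (Sum.inl j) = -(if (j : ℕ) = (s : ℕ) then 1 else 0))
    -- ρ-column: diag(ε)(d ⊗ [-1,1]ᵀ)
    (hBρ : ∀ (ℓ : Fin La) (s : Fin 2),
      H (Sum.inr (ℓ, s)) (Sum.inl ⟨2, by omega⟩) =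
        if (s : ℕ) = 0 then -(Real.sin (ρ - φ ℓ)) * d ℓ
        else Real.cos (ρ - φ ℓ) * d ℓ)
    -- bottom-right block (I ⊗ T₂) diag(ε) (I ⊗ 1_{2×1})
    (hBR : ∀ (ℓ : Fin La) (s : Fin 2) (ℓ' : Fin La),
      H (Sum.inr (ℓ, s)) (Sum.inr ℓ') =
        if ℓ' = ℓ then
          (if (s : ℕ) = 0 then Real.cos (ρ - φ ℓ) else Real.sin (ρ - φ ℓ))
        else 0)
    (hAOD : ∀ ℓ ℓ', φ ℓ = φ ℓ') :
    H.rank < La + 3 ∧ ¬ IsUnit (H.transpose * H) := by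
  have hLa0 : 0 < La := by omega
  set e0 : Fin La := ⟨0, hLa0⟩ with he0
  set v : Fin 3 ⊕ Fin La → ℝ := Sum.elim
    (fun j => if (j : ℕ) = 0 then Real.cos (ρ - φ e0)
      else if (j : ℕ) = 1 then Real.sin (ρ - φ e0) else 0)
    (fun _ => 1) with hv
  have hv0 : v ≠ 0 := by
    intro h
    have := congrFun h (Sum.inr e0)
    simp [hv] at this
  have hHv : H.mulVec v = 0 := by
    funext i
    cases i with
    | inl i =>
      have h1 : (i : ℕ) + 1 < La := by have := i.isLt; omega
      have key : ∀ ℓ : Fin La, H (Sum.inl i) (Sum.inr ℓ) * v (Sum.inr ℓ) =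
          (if ℓ = e0 then (-1 : ℝ) else 0)
          + (if ℓ = (⟨(i : ℕ) + 1, h1⟩ : Fin La) then 1 else 0) := by
        intro ℓ
        rw [hTR]
        simp only [hv, Sum.elim_inr, mul_one, Fin.ext_iff, he0]
        split_ifs <;> (try norm_num) <;> omega
      simp only [Matrix.mulVec, dotProduct, Fintype.sum_sum_type, Pi.zero_apply]
      rw [Finset.sum_congr rfl (fun ℓ _ => key ℓ)]
      simp only [hTL, zero_mul, Finset.sum_const_zero, Finset.sum_add_distrib,
        Finset.sum_ite_eq', Finset.mem_univ, if_true]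
      ring
    | inr p =>
      obtain ⟨ℓ, s⟩ := p
      have hφ : φ ℓ = φ e0 := hAOD ℓ e0
      have key : ∀ ℓ' : Fin La, H (Sum.inr (ℓ, s)) (Sum.inr ℓ') * v (Sum.inr ℓ') =
          (if ℓ' = ℓ then
            (if (s : ℕ) = 0 then Real.cos (ρ - φ ℓ) else Real.sin (ρ - φ ℓ)) else 0) := by
        intro ℓ'
        rw [hBR]
        simp [hv]
      simp only [Matrix.mulVec, dotProduct, Fintype.sum_sum_type, Pi.zero_apply]
      rw [Finset.sum_congr rfl (fun ℓ' _ => key ℓ'), Finset.sum_ite_eq',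
        Fin.sum_univ_three]
      have h2 : (2 : Fin 3) = ⟨2, by omega⟩ := rfl
      rw [hBL ℓ s 0 (by norm_num), hBL ℓ s 1 (by norm_num), h2, hBρ ℓ s]
      fin_cases s <;>
        simp [hv, hφ] <;> ring
  have hsq : (H.transpose * H).mulVec v = 0 := by
    rw [← Matrix.mulVec_mulVec, hHv, Matrix.mulVec_zero]
  have hdet : (H.transpose * H).det = 0 :=
    Matrix.exists_mulVec_eq_zero_iff.mp ⟨v, hv0, hsq⟩
  constructor
  · have hrank : (H.transpose * H).rank = H.rank := Matrix.rank_transpose_mul_self H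
    rw [← hrank]
    have hker : v ∈ LinearMap.ker (H.transpose * H).mulVecLin := by
      rw [LinearMap.mem_ker, Matrix.mulVecLin_apply]; exact hsq
    have hkerne : LinearMap.ker (H.transpose * H).mulVecLin ≠ ⊥ := by
      intro h
      rw [h, Submodule.mem_bot] at hker
      exact hv0 hker
    have hpos : 0 < Module.finrank ℝ (LinearMap.ker (H.transpose * H).mulVecLin) := by
      exact Module.finrank_pos_iff.mpr (Submodule.nontrivial_iff_ne_bot.mpr hkerne)
    have hrn := LinearMap.finrank_range_add_finrank_ker (H.transpose * H).mulVecLin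
    have hcard : Module.finrank ℝ ((Fin 3 ⊕ Fin La) → ℝ) = La + 3 := by
      simp [Module.finrank_pi]; omega
    rw [hcard] at hrn
    have : (H.transpose * H).rank = Module.finrank ℝ (LinearMap.range (H.transpose * H).mulVecLin) := rfl
    omega
  · rw [Matrix.isUnit_iff_isUnit_det, hdet]
    exact fun h => by simp at h
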